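/- arXiv:2304.04340 — 2 statements merged into one kernel-verified Lean document; each statement's English description precedes it below -/
import Mathlib

section
/- In the HNN extension G = ⟨E, t | ∀a ∈ E₋, t a t⁻¹ = τ(a)⟩, where τ : E₋ → E₊ is an isomorphism between finite-index normal subgroups E₋, E₊ of the group E, the subgroup E is quasi-normal in G: for every g ∈ G, E ∩ gEg⁻¹ has finite index in both E and gEg⁻¹. -/
open HNNExtension

/-- The conjugate subgroup `gEg⁻¹`. -/
def conjSubgroup {G : Type*} [Group G] (g : G) (E : Subgroup G) : Subgroup G :=
  E.map (MulAut.conj g).toMonoidHom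

lemma conjSubgroup_mono {G : Type*} [Group G] (g : G) {H K : Subgroup G} (h : H ≤ K) :
    conjSubgroup g H ≤ conjSubgroup g K :=
  Subgroup.map_mono h

lemma conjSubgroup_mul {G : Type*} [Group G] (g₁ g₂ : G) (H : Subgroup G) :
    conjSubgroup (g₁ * g₂) H = conjSubgroup g₁ (conjSubgroup g₂ H) := by
  simp only [conjSubgroup, Subgroup.map_map]
  congr 1
  ext x
  simp [mul_assoc]

lemma mem_conjSubgroup_iff {G : Type*} [Group G] (g x : G) (H : Subgroup G) :
    x ∈ conjSubgroup g H ↔ ∃ y ∈ H, g * y * g⁻¹ = x := by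
  simp [conjSubgroup, Subgroup.mem_map, MulAut.conj_apply]

section Key

variable {E : Type*} [Group E] (Em Ep : Subgroup E)
    [Em.Normal] [Ep.Normal] (τ : Em ≃* Ep)

local notation "G" => HNNExtension E Em Ep τ

/-- Conjugation by `g` pulls finite-index subgroups of `E` back over one. -/
def Pulls (g : G) : Prop :=
  ∀ L : Subgroup E, L.index ≠ 0 → ∃ K : Subgroup E, K.index ≠ 0 ∧
    K.map (HNNExtension.of (φ := τ)) ≤
      conjSubgroup g (L.map (HNNExtension.of (φ := τ)))

lemma pulls_of (e : E) : Pulls Em Ep τ (HNNExtension.of e) := by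
  intro L hL
  refine ⟨L.map (MulAut.conj e).toMonoidHom, ?_, ?_⟩
  · rw [Subgroup.index_map_of_injective _ (MulAut.conj e).injective,
      MonoidHom.range_eq_top.2 (MulAut.conj e).surjective, Subgroup.index_top, mul_one]
    exact hL
  · rintro x hx
    rw [Subgroup.mem_map] at hx
    obtain ⟨y, hy, rfl⟩ := hx
    rw [Subgroup.mem_map] at hy
    obtain ⟨z, hz, rfl⟩ := hy
    rw [mem_conjSubgroup_iff]
    exact ⟨HNNExtension.of z, Subgroup.mem_map_of_mem _ hz, by
      simp [MulAut.conj_apply]⟩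

lemma index_subgroupOf_ne_zero {L H : Subgroup E} (hL : L.index ≠ 0) (hH : H.index ≠ 0) :
    ((L ⊓ H).subgroupOf H).index ≠ 0 := by
  have h1 : (L ⊓ H).index ≠ 0 := Subgroup.index_inf_ne_zero hL hH
  have h2 := Subgroup.relIndex_mul_index (H := L ⊓ H) (K := H) inf_le_right
  intro h0
  have h0' : (L ⊓ H).relIndex H = 0 := h0
  rw [h0', zero_mul] at h2
  exact h1 h2.symm

lemma pulls_t (hEm : Em.index ≠ 0) (hEp : Ep.index ≠ 0) :
    Pulls Em Ep τ (HNNExtension.t) := by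
  intro L hL
  refine ⟨(((L ⊓ Em).subgroupOf Em).map τ.toMonoidHom).map Ep.subtype, ?_, ?_⟩
  · rw [Subgroup.index_map_subtype, Subgroup.index_map_of_injective _ τ.injective,
      MonoidHom.range_eq_top.2 τ.surjective, Subgroup.index_top, mul_one]
    exact Nat.mul_ne_zero (index_subgroupOf_ne_zero hL hEm) hEp
  · rintro x hx
    rw [Subgroup.mem_map] at hx
    obtain ⟨y, hy, rfl⟩ := hx
    rw [Subgroup.mem_map] at hy
    obtain ⟨z, hz, rfl⟩ := hy
    rw [Subgroup.mem_map] at hz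
    obtain ⟨a, ha, rfl⟩ := hz
    rw [mem_conjSubgroup_iff]
    refine ⟨HNNExtension.of (a : E), Subgroup.mem_map_of_mem _ ?_, ?_⟩
    · rw [Subgroup.mem_subgroupOf] at ha
      exact ha.1
    · rw [← HNNExtension.equiv_eq_conj]
      rfl

lemma pulls_t_inv (hEm : Em.index ≠ 0) (hEp : Ep.index ≠ 0) :
    Pulls Em Ep τ (HNNExtension.t)⁻¹ := by
  intro L hL
  refine ⟨(((L ⊓ Ep).subgroupOf Ep).map τ.symm.toMonoidHom).map Em.subtype, ?_, ?_⟩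
  · rw [Subgroup.index_map_subtype, Subgroup.index_map_of_injective _ τ.symm.injective,
      MonoidHom.range_eq_top.2 τ.symm.surjective, Subgroup.index_top, mul_one]
    exact Nat.mul_ne_zero (index_subgroupOf_ne_zero hL hEp) hEm
  · rintro x hx
    rw [Subgroup.mem_map] at hx
    obtain ⟨y, hy, rfl⟩ := hx
    rw [Subgroup.mem_map] at hy
    obtain ⟨z, hz, rfl⟩ := hy
    rw [Subgroup.mem_map] at hz
    obtain ⟨b, hb, rfl⟩ := hz
    rw [mem_conjSubgroup_iff]
    refine ⟨HNNExtension.of (b : E), Subgroup.mem_map_of_mem _ ?_, ?_⟩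
    · rw [Subgroup.mem_subgroupOf] at hb
      exact hb.1
    · rw [inv_inv, ← HNNExtension.equiv_symm_eq_conj]
      rfl

lemma pulls_mul {g₁ g₂ : G} (h₁ : Pulls Em Ep τ g₁) (h₂ : Pulls Em Ep τ g₂) :
    Pulls Em Ep τ (g₁ * g₂) := by
  intro L hL
  obtain ⟨K₂, hK₂, hle₂⟩ := h₂ L hL
  obtain ⟨K₁, hK₁, hle₁⟩ := h₁ K₂ hK₂
  refine ⟨K₁, hK₁, ?_⟩
  rw [conjSubgroup_mul]
  exact hle₁.trans (conjSubgroup_mono g₁ hle₂)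

lemma pulls_all (hEm : Em.index ≠ 0) (hEp : Ep.index ≠ 0) (g : G) :
    Pulls Em Ep τ g ∧ Pulls Em Ep τ g⁻¹ := by
  induction g using HNNExtension.induction_on with
  | of e =>
    refine ⟨pulls_of Em Ep τ e, ?_⟩
    have : (HNNExtension.of (φ := τ) e)⁻¹ = HNNExtension.of e⁻¹ := by
      rw [map_inv]
    rw [this]
    exact pulls_of Em Ep τ e⁻¹
  | t => exact ⟨pulls_t Em Ep τ hEm hEp, pulls_t_inv Em Ep τ hEm hEp⟩
  | mul x y hx hy =>
    refine ⟨pulls_mul Em Ep τ hx.1 hy.1, ?_⟩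
    rw [mul_inv_rev]
    exact pulls_mul Em Ep τ hy.2 hx.2
  | inv x hx =>
    refine ⟨hx.2, ?_⟩
    rw [inv_inv]
    exact hx.1

lemma relindex_conj_ne_zero (hEm : Em.index ≠ 0) (hEp : Ep.index ≠ 0) (g : G)
    (h : Pulls Em Ep τ g) :
    (conjSubgroup g (HNNExtension.of (φ := τ)).range).relIndex
      (HNNExtension.of (φ := τ)).range ≠ 0 := by
  obtain ⟨K, hK, hle⟩ := h ⊤ (by simp)
  have hle' : K.map (HNNExtension.of (φ := τ)) ≤
      conjSubgroup g (HNNExtension.of (φ := τ)).range := by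
    refine hle.trans (le_of_eq ?_)
    congr 1
    exact (MonoidHom.range_eq_map _).symm
  have hdvd := Subgroup.relIndex_dvd_of_le_left
    (L := (HNNExtension.of (φ := τ)).range) hle'
  intro h0
  have hrel : (K.map (HNNExtension.of (φ := τ))).relIndex
      (HNNExtension.of (φ := τ)).range = 0 :=
    Nat.eq_zero_of_zero_dvd (h0 ▸ hdvd)
  rw [← Subgroup.index_comap,
    Subgroup.comap_map_eq_self_of_injective (HNNExtension.of_injective τ)] at hrel
  exact hK hrel

end Key

/-- In the HNN extension `G = ⟨E, t ∣ ∀ a ∈ E₋, t a t⁻¹ = τ(a)⟩`, where `τ : E₋ → E₊` is an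
isomorphism between finite-index normal subgroups `E₋`, `E₊` of `E`, the (image of the) subgroup
`E` is quasi-normal in `G`: for every `g ∈ G`, `E ∩ gEg⁻¹` has finite index in both `E` and
`gEg⁻¹`. -/
theorem hnn_base_quasiNormal {E : Type*} [Group E] (Em Ep : Subgroup E)
    [Em.Normal] [Ep.Normal] (hEm : Em.index ≠ 0) (hEp : Ep.index ≠ 0)
    (τ : Em ≃* Ep) (g : HNNExtension E Em Ep τ) :
    (conjSubgroup g (HNNExtension.of (φ := τ)).range).relIndex
        (HNNExtension.of (φ := τ)).range ≠ 0 ∧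
    ((HNNExtension.of (φ := τ)).range).relIndex
        (conjSubgroup g (HNNExtension.of (φ := τ)).range) ≠ 0 := by
  obtain ⟨hg, hginv⟩ := pulls_all Em Ep τ hEm hEp g
  refine ⟨relindex_conj_ne_zero Em Ep τ hEm hEp g hg, ?_⟩
  have key := relindex_conj_ne_zero Em Ep τ hEm hEp g⁻¹ hginv
  have hcomap : (HNNExtension.of (φ := τ)).range.comap (MulAut.conj g).toMonoidHom =
      conjSubgroup g⁻¹ (HNNExtension.of (φ := τ)).range := by
    ext x
    rw [Subgroup.mem_comap, mem_conjSubgroup_iff]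
    simp only [MulEquiv.coe_toMonoidHom, MulAut.conj_apply, MonoidHom.mem_range]
    constructor
    · rintro ⟨y, hy⟩
      exact ⟨HNNExtension.of y, ⟨y, rfl⟩, by rw [hy]; group⟩
    · rintro ⟨z, ⟨y, rfl⟩, hz⟩
      exact ⟨y, by rw [← hz]; group⟩
  have heq := Subgroup.relIndex_comap ((HNNExtension.of (φ := τ)).range)
    (MulAut.conj g).toMonoidHom ((HNNExtension.of (φ := τ)).range)
  rw [hcomap] at heq
  have goal_eq : conjSubgroup g (HNNExtension.of (φ := τ)).range =
      Subgroup.map (MulAut.conj g).toMonoidHom (HNNExtension.of (φ := τ)).range := rfl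
  rw [goal_eq, ← heq]
  exact key
end

section
/- Let G = ⟨E, t | ∀a ∈ E₋, t a t⁻¹ = τ(a)⟩ be the HNN extension as above, p = [E : E₋], q = [E : E₊], and m : G → ℚ₊* the modular homomorphism associated to E. Then m(t) = q/p and m(a) = 1 for every a ∈ E; in particular the image of m is the cyclic subgroup of ℚ₊* generated by q/p. -/
open HNNExtension

/-- The modular map `m(g) = [E : E ∩ gEg⁻¹] / [gEg⁻¹ : E ∩ gEg⁻¹]`. -/
noncomputable def modularMap {G : Type*} [Group G] (E : Subgroup G) (g : G) : ℚ :=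
  ((conjSubgroup g E).relIndex E : ℚ) / (E.relIndex (conjSubgroup g E) : ℚ)

section Aux

open Subgroup

variable {Γ : Type*} [Group Γ]

theorem relindex_map_inj {Γ' : Type*} [Group Γ'] {f : Γ →* Γ'} (hf : Function.Injective f)
    (K L : Subgroup Γ) : (K.map f).relIndex (L.map f) = K.relIndex L := by
  rw [← relIndex_comap, comap_map_eq_self_of_injective hf]

theorem relindex_map_range {Γ' : Type*} [Group Γ'] {f : Γ →* Γ'} (hf : Function.Injective f)
    (K : Subgroup Γ) : (K.map f).relIndex f.range = K.index := by
  rw [f.range_eq_map, relindex_map_inj hf, relIndex_top_right]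

/-- The commensurability ratio `[K : K ⊓ L] / [L : K ⊓ L]`. -/
noncomputable def dd (K L : Subgroup Γ) : ℚ :=
  (L.relIndex K : ℚ) / (K.relIndex L : ℚ)

theorem dd_def (K L : Subgroup Γ) : dd K L = (L.relIndex K : ℚ) / (K.relIndex L : ℚ) := rfl

theorem dd_inv (K L : Subgroup Γ) : dd K L = (dd L K)⁻¹ := by
  rw [dd_def, dd_def, inv_div]

theorem modularMap_eq_dd (K : Subgroup Γ) (g : Γ) :
    modularMap K g = dd K (conjSubgroup g K) := rfl

theorem relindex_conjSubgroup (g : Γ) (A B : Subgroup Γ) :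
    (conjSubgroup g A).relIndex (conjSubgroup g B) = A.relIndex B :=
  relindex_map_inj (MulAut.conj g).injective A B

theorem dd_conjSubgroup (g : Γ) (A B : Subgroup Γ) :
    dd (conjSubgroup g A) (conjSubgroup g B) = dd A B := by
  rw [dd_def, dd_def, relindex_conjSubgroup, relindex_conjSubgroup]

theorem commensurable_conjSubgroup {A B : Subgroup Γ} (g : Γ) (h : Commensurable A B) :
    Commensurable (conjSubgroup g A) (conjSubgroup g B) :=
  ⟨by rw [relindex_conjSubgroup]; exact h.1, by rw [relindex_conjSubgroup]; exact h.2⟩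

theorem conjSubgroup_mul_s3 (g h : Γ) (K : Subgroup Γ) :
    conjSubgroup (g * h) K = conjSubgroup g (conjSubgroup h K) := by
  simp only [conjSubgroup, Subgroup.map_map]
  congr 1
  ext x
  simp [mul_assoc]

theorem conjSubgroup_one (K : Subgroup Γ) : conjSubgroup (1 : Γ) K = K := by
  ext x
  simp [conjSubgroup]

theorem conjSubgroup_inv_conj (g : Γ) (K : Subgroup Γ) :
    conjSubgroup g⁻¹ (conjSubgroup g K) = K := by
  rw [← conjSubgroup_mul_s3, inv_mul_cancel, conjSubgroup_one]

theorem conjSubgroup_conj_inv (g : Γ) (K : Subgroup Γ) :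
    conjSubgroup g (conjSubgroup g⁻¹ K) = K := by
  rw [← conjSubgroup_mul_s3, mul_inv_cancel, conjSubgroup_one]

theorem conjSubgroup_eq_self_of_mem {K : Subgroup Γ} {g : Γ} (hg : g ∈ K) :
    conjSubgroup g K = K := by
  apply le_antisymm
  · rintro x ⟨y, hy, rfl⟩
    simpa using K.mul_mem (K.mul_mem hg hy) (K.inv_mem hg)
  · intro x hx
    exact ⟨g⁻¹ * x * g, K.mul_mem (K.mul_mem (K.inv_mem hg) hx) hg, by
      simp [mul_assoc]⟩

theorem dd_eq_of_le {X K L : Subgroup Γ} (hXK : X ≤ K ⊓ L) (he : X.relIndex (K ⊓ L) ≠ 0) :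
    dd K L = (X.relIndex K : ℚ) / (X.relIndex L : ℚ) := by
  have h1 : X.relIndex (K ⊓ L) * (K ⊓ L).relIndex K = X.relIndex K :=
    relIndex_mul_relIndex _ _ _ hXK inf_le_left
  have h2 : X.relIndex (K ⊓ L) * (K ⊓ L).relIndex L = X.relIndex L :=
    relIndex_mul_relIndex _ _ _ hXK inf_le_right
  rw [dd_def, ← h1, ← h2, inf_relIndex_left, inf_relIndex_right]
  push_cast
  rw [mul_div_mul_left _ _ (by exact_mod_cast he)]

theorem dd_mul {K L M : Subgroup Γ} (hKL : Commensurable K L) (hLM : Commensurable L M)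
    (hKM : Commensurable K M) : dd K M = dd K L * dd L M := by
  set X := K ⊓ L ⊓ M with hX
  have hMKL : M.relIndex (K ⊓ L) ≠ 0 := fun h0 =>
    relIndex_inf_ne_zero hLM.2 hKL.1 (by rw [← relIndex_inf_mul_relIndex, h0, zero_mul])
  have hKLM : K.relIndex (L ⊓ M) ≠ 0 := fun h0 =>
    relIndex_inf_ne_zero hKM.1 hLM.1 (by rw [← relIndex_inf_mul_relIndex, h0, zero_mul])
  have hLKM : L.relIndex (K ⊓ M) ≠ 0 := fun h0 =>
    relIndex_inf_ne_zero hLM.1 hKM.1 (by rw [← relIndex_inf_mul_relIndex, h0, zero_mul])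
  have e1 : X.relIndex (K ⊓ L) = M.relIndex (K ⊓ L) := by
    rw [hX, inf_comm (K ⊓ L) M, inf_relIndex_right]
  have e2 : X.relIndex (L ⊓ M) = K.relIndex (L ⊓ M) := by
    rw [hX, inf_assoc, inf_relIndex_right]
  have e3 : X.relIndex (K ⊓ M) = L.relIndex (K ⊓ M) := by
    rw [hX, inf_comm K L, inf_assoc, inf_relIndex_right]
  have hXKL : X ≤ K ⊓ L := inf_le_left
  have hXLM : X ≤ L ⊓ M := le_inf (inf_le_left.trans inf_le_right) inf_le_right
  have hXKM : X ≤ K ⊓ M := le_inf (inf_le_left.trans inf_le_left) inf_le_right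
  have dKL := dd_eq_of_le hXKL (by rw [e1]; exact hMKL)
  have dLM := dd_eq_of_le hXLM (by rw [e2]; exact hKLM)
  have dKM := dd_eq_of_le hXKM (by rw [e3]; exact hLKM)
  have hXL : X.relIndex L ≠ 0 := by
    rw [← relIndex_mul_relIndex X (K ⊓ L) L hXKL inf_le_right]
    exact mul_ne_zero (by rw [e1]; exact hMKL) (by rw [inf_relIndex_right]; exact hKL.1)
  have hq : ((X.relIndex L : ℚ)) ≠ 0 := by exact_mod_cast hXL
  rw [dKM, dKL, dLM, div_mul_div_comm, mul_comm ((X.relIndex K : ℚ)), mul_div_mul_left _ _ hq]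

end Aux

section HNN

open Subgroup

variable {E : Type*} [Group E] {Em Ep : Subgroup E} (τ : Em ≃* Ep)

/-- The homomorphism counting the total `t`-exponent. -/
def expHom : HNNExtension E Em Ep τ →* Multiplicative ℤ :=
  HNNExtension.lift 1 (Multiplicative.ofAdd 1) (by intro a; simp)

theorem conj_t_map_Em :
    conjSubgroup (t (φ := τ)) (Em.map (HNNExtension.of (φ := τ))) =
      Ep.map (HNNExtension.of (φ := τ)) := by
  apply le_antisymm
  · rintro x ⟨y, ⟨a, ha, rfl⟩, rfl⟩
    simp only [MulEquiv.coe_toMonoidHom, MulAut.conj_apply]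
    refine ⟨↑(τ ⟨a, ha⟩), (τ ⟨a, ha⟩).2, ?_⟩
    rw [eq_comm, mul_inv_eq_iff_eq_mul]
    exact (t_mul_of (φ := τ) ⟨a, ha⟩)
  · rintro x ⟨b, hb, rfl⟩
    refine ⟨HNNExtension.of ↑(τ.symm ⟨b, hb⟩), ⟨↑(τ.symm ⟨b, hb⟩), (τ.symm ⟨b, hb⟩).2, rfl⟩, ?_⟩
    simp only [MulEquiv.coe_toMonoidHom, MulAut.conj_apply]
    rw [mul_inv_eq_iff_eq_mul, t_mul_of (φ := τ)]
    simp

theorem inf_conj_t :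
    (HNNExtension.of (φ := τ)).range ⊓
        conjSubgroup (t (φ := τ)) (HNNExtension.of (φ := τ)).range =
      Ep.map (HNNExtension.of (φ := τ)) := by
  apply le_antisymm
  · rintro x ⟨hx1, z, ⟨g, rfl⟩, rfl⟩
    simp only [MulEquiv.coe_toMonoidHom, MulAut.conj_apply] at hx1 ⊢
    have hg : g ∈ Em := by
      by_contra hg
      let w : HNNExtension.NormalWord.ReducedWord E Em Ep :=
        ⟨1, [(1, g), (-1, 1)], List.isChain_cons_cons.mpr ⟨fun h => absurd h hg,
          List.isChain_singleton _⟩⟩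
      have hprod : w.prod τ = t * HNNExtension.of g * t⁻¹ := by
        simp [w, HNNExtension.NormalWord.ReducedWord.prod, mul_assoc]
      have := HNNExtension.ReducedWord.toList_eq_nil_of_mem_of_range τ w
        (by rw [hprod]; exact hx1)
      simp [w] at this
    refine ⟨↑(τ ⟨g, hg⟩), (τ ⟨g, hg⟩).2, ?_⟩
    rw [eq_comm, mul_inv_eq_iff_eq_mul]
    exact (t_mul_of (φ := τ) ⟨g, hg⟩)
  · rw [← conj_t_map_Em τ]
    refine le_inf ?_ (Subgroup.map_mono (Subgroup.map_le_range _ _))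
    rw [conj_t_map_Em τ]
    rintro x ⟨b, _, rfl⟩
    exact ⟨b, rfl⟩

theorem relindex_conj_t_left :
    (conjSubgroup (t (φ := τ)) (HNNExtension.of (φ := τ)).range).relIndex
      (HNNExtension.of (φ := τ)).range = Ep.index := by
  rw [← inf_relIndex_right, inf_comm, inf_conj_t τ,
    relindex_map_range (HNNExtension.of_injective τ)]

theorem relindex_conj_t_right :
    (HNNExtension.of (φ := τ)).range.relIndex
      (conjSubgroup (t (φ := τ)) (HNNExtension.of (φ := τ)).range) = Em.index := by
  rw [← inf_relIndex_right, inf_conj_t τ, ← conj_t_map_Em τ, relindex_conjSubgroup,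
    relindex_map_range (HNNExtension.of_injective τ)]

theorem hnn_main (hEm : Em.index ≠ 0) (hEp : Ep.index ≠ 0)
    (g : HNNExtension E Em Ep τ) :
    Commensurable (conjSubgroup g (HNNExtension.of (φ := τ)).range)
        (HNNExtension.of (φ := τ)).range ∧
      modularMap (HNNExtension.of (φ := τ)).range g =
        ((Ep.index : ℚ) / (Em.index : ℚ)) ^ (Multiplicative.toAdd (expHom τ g)) := by
  have hr : ((Ep.index : ℚ) / (Em.index : ℚ)) ≠ 0 :=
    div_ne_zero (Nat.cast_ne_zero.2 hEp) (Nat.cast_ne_zero.2 hEm)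
  induction g using HNNExtension.induction_on with
  | of g =>
    have h : conjSubgroup (HNNExtension.of (φ := τ) g) (HNNExtension.of (φ := τ)).range =
        (HNNExtension.of (φ := τ)).range := by
      exact conjSubgroup_eq_self_of_mem (MonoidHom.mem_range.2 ⟨g, rfl⟩)
    constructor
    · rw [h]
    · rw [modularMap_eq_dd, h, dd_def, relIndex_self]
      simp [expHom]
  | t =>
    refine ⟨⟨by rw [relindex_conj_t_left τ]; exact hEp,
      by rw [relindex_conj_t_right τ]; exact hEm⟩, ?_⟩
    rw [modularMap_eq_dd, dd_def, relindex_conj_t_left τ, relindex_conj_t_right τ]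
    simp [expHom]
  | mul x y ihx ihy =>
    obtain ⟨cx, mx⟩ := ihx
    obtain ⟨cy, my⟩ := ihy
    have hxy : conjSubgroup (x * y) (HNNExtension.of (φ := τ)).range =
        conjSubgroup x (conjSubgroup y (HNNExtension.of (φ := τ)).range) :=
      conjSubgroup_mul_s3 x y _
    have c1 : Commensurable
        (conjSubgroup x (conjSubgroup y (HNNExtension.of (φ := τ)).range))
        (conjSubgroup x (HNNExtension.of (φ := τ)).range) :=
      commensurable_conjSubgroup x cy
    have cxy : Commensurable (conjSubgroup (x * y) (HNNExtension.of (φ := τ)).range)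
        (HNNExtension.of (φ := τ)).range := by
      rw [hxy]; exact c1.trans cx
    refine ⟨cxy, ?_⟩
    rw [modularMap_eq_dd, hxy]
    have key := dd_mul (K := (HNNExtension.of (φ := τ)).range)
      (L := conjSubgroup x (HNNExtension.of (φ := τ)).range)
      (M := conjSubgroup x (conjSubgroup y (HNNExtension.of (φ := τ)).range))
      cx.symm c1.symm (by rw [← hxy]; exact cxy.symm)
    rw [key, dd_conjSubgroup, ← modularMap_eq_dd, ← modularMap_eq_dd, mx, my, map_mul,
      toAdd_mul, zpow_add₀ hr]
  | inv x ihx =>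
    obtain ⟨cx, mx⟩ := ihx
    have h0 : conjSubgroup x⁻¹ (conjSubgroup x (HNNExtension.of (φ := τ)).range) =
        (HNNExtension.of (φ := τ)).range := conjSubgroup_inv_conj x _
    have cinv := commensurable_conjSubgroup x⁻¹ cx
    rw [h0] at cinv
    refine ⟨cinv.symm, ?_⟩
    have h1 : conjSubgroup x (conjSubgroup x⁻¹ (HNNExtension.of (φ := τ)).range) =
        (HNNExtension.of (φ := τ)).range := conjSubgroup_conj_inv x _
    rw [modularMap_eq_dd, dd_inv, ← dd_conjSubgroup x, h1, ← modularMap_eq_dd, mx,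
      map_inv, toAdd_inv, zpow_neg]

end HNN

/-- Let `G = ⟨E, t ∣ ∀ a ∈ E₋, t a t⁻¹ = τ(a)⟩` be an HNN extension with `E₋, E₊` of finite
index `p = [E : E₋]`, `q = [E : E₊]` in `E`, and let `m` be the modular map associated to (the
image of) `E`.  Then `m(t) = q/p`, `m(a) = 1` for every `a ∈ E`, and the image of `m` is the
cyclic subgroup of `ℚ₊*` generated by `q/p`. -/
theorem hnn_modularMap {E : Type*} [Group E] (Em Ep : Subgroup E)
    [Em.Normal] [Ep.Normal] (hEm : Em.index ≠ 0) (hEp : Ep.index ≠ 0)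
    (τ : Em ≃* Ep) :
    modularMap (HNNExtension.of (φ := τ)).range (HNNExtension.t (φ := τ)) =
        (Ep.index : ℚ) / (Em.index : ℚ) ∧
    (∀ a : E, modularMap (HNNExtension.of (φ := τ)).range (HNNExtension.of a) = 1) ∧
    Set.range (modularMap (HNNExtension.of (φ := τ)).range) =
        Set.range (fun n : ℤ => ((Ep.index : ℚ) / (Em.index : ℚ)) ^ n) := by
  refine ⟨?_, ?_, ?_⟩
  · have h := (hnn_main τ hEm hEp (HNNExtension.t (φ := τ))).2
    rwa [show Multiplicative.toAdd (expHom τ (HNNExtension.t (φ := τ))) = 1 by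
      simp [expHom], zpow_one] at h
  · intro a
    have h := (hnn_main τ hEm hEp (HNNExtension.of a)).2
    rwa [show Multiplicative.toAdd (expHom τ (HNNExtension.of (φ := τ) a)) = 0 by
      simp [expHom], zpow_zero] at h
  · ext r
    constructor
    · rintro ⟨g, rfl⟩
      exact ⟨Multiplicative.toAdd (expHom τ g), ((hnn_main τ hEm hEp g).2).symm⟩
    · rintro ⟨n, rfl⟩
      refine ⟨(HNNExtension.t (φ := τ)) ^ n, ?_⟩
      rw [(hnn_main τ hEm hEp _).2]
      congr 1
      simp [expHom]
end
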